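/- Let (Ω, F, ℙ) be a probability space with a filtration (F_k)_{k∈ℕ}, and let (x_k)_{k∈ℕ} and (x̂_k)_{k∈ℕ} be ℝⁿ-valued adapted stochastic processes with deterministic initial conditions x_0 = a and x̂_0 = â. Suppose there exist a Borel-measurable function S : ℝⁿ × ℝⁿ → ℝ≥0 and constants α > 0, ψ ≥ 0 such that: (i) α‖x − x̂‖² ≤ S(x, x̂) for all x, x̂ ∈ ℝⁿ; (ii) S(x_k, x̂_k) is integrable for every k and 𝔼[S(x_{k+1}, x̂_{k+1}) | F_k] ≤ S(x_k, x̂_k) + ψ almost surely for all k ∈ ℕ. Then for every ε > 0 and every finite time horizon T ∈ ℕ⁺, ℙ{ sup_{0 ≤ k ≤ T} ‖x_k − x̂_k‖ ≥ ε } ≤ (S(a, â) + ψ·T) / (α ε²). -/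

import Mathlib

open MeasureTheory


/-- Maximal inequality for nonnegative supermartingales (discrete time, finite horizon). -/
lemma supermartingale_maximal_ineq
    {Ω : Type*} {m0 : MeasurableSpace Ω} {μ : Measure Ω} [IsFiniteMeasure μ]
    {𝒢 : Filtration ℕ m0} {g : ℕ → Ω → ℝ}
    (hg : Supermartingale g 𝒢 μ) (hnonneg : ∀ k ω, 0 ≤ g k ω)
    {c : ℝ} (hc : 0 < c) (N : ℕ) :
    μ {ω | ∃ k ≤ N, c ≤ g k ω} ≤ ENNReal.ofReal ((∫ ω, g 0 ω ∂μ) / c) := by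
  set τ : Ω → ℕ∞ := fun ω => ((hittingBtwn g (Set.Ici c) 0 N ω : ℕ) : ℕ∞) with hτdef
  have hτ : IsStoppingTime 𝒢 τ := Adapted.isStoppingTime_hittingBtwn hg.stronglyAdapted.adapted measurableSet_Ici
  have hτ_le : ∀ ω, τ ω ≤ N := fun ω => by simpa [hτdef] using hittingBtwn_le (u := g) (s := Set.Ici c) (n := 0) ω
  set A : Set Ω := {ω | ∃ k ≤ N, c ≤ g k ω} with hA
  have hAmeas : MeasurableSet A := by
    have : A = ⋃ k, ⋃ (_ : k ≤ N), {ω | c ≤ g k ω} := by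
      ext ω; simp [hA]
    rw [this]
    exact MeasurableSet.iUnion fun k => MeasurableSet.iUnion fun _ =>
      measurableSet_le measurable_const
        ((hg.stronglyAdapted k).measurable.le (𝒢.le k))
  have hsv_int : Integrable (stoppedValue g τ) μ := by
    have h := (hg.neg.integrable_stoppedValue hτ hτ_le).neg
    have he : (-(stoppedValue (-g) τ)) = stoppedValue g τ := by
      funext ω; simp [stoppedValue]
    rwa [he] at h
  -- on A, the stopped value is at least c
  have hge : ∀ ω ∈ A, c ≤ stoppedValue g τ ω := by
    intro ω hω
    obtain ⟨k, hkN, hk⟩ := hω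
    refine stoppedValue_hittingBtwn_mem (u := g) (s := Set.Ici c) ?_
    exact ⟨k, ⟨Nat.zero_le _, hkN⟩, hk⟩
  have h1 : c * (μ A).toReal ≤ ∫ ω in A, stoppedValue g τ ω ∂μ :=
    setIntegral_ge_of_const_le_real hAmeas (measure_ne_top _ _) hge hsv_int.integrableOn
  have h2 : ∫ ω in A, stoppedValue g τ ω ∂μ ≤ ∫ ω, stoppedValue g τ ω ∂μ := by
    refine setIntegral_le_integral hsv_int (Filter.Eventually.of_forall fun ω => ?_)
    exact hnonneg _ ω
  have h3 : ∫ ω, stoppedValue g τ ω ∂μ ≤ ∫ ω, g 0 ω ∂μ := by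
    have := hg.neg.expected_stoppedValue_mono (isStoppingTime_const 𝒢 0) hτ
      (fun ω => WithTop.coe_le_coe.mpr (Nat.zero_le _)) hτ_le
    simp only [stoppedValue] at this ⊢
    simp only [Pi.neg_apply, integral_neg, neg_le_neg_iff] at this
    simpa using this
  have hfin : μ A ≠ ⊤ := measure_ne_top _ _
  have hnum : 0 ≤ ∫ ω, g 0 ω ∂μ := integral_nonneg fun ω => hnonneg 0 ω
  rw [ENNReal.le_ofReal_iff_toReal_le hfin (div_nonneg hnum hc.le)]
  · rw [le_div_iff₀ hc]
    calc (μ A).toReal * c = c * (μ A).toReal := mul_comm _ _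
    _ ≤ _ := h1.trans (h2.trans h3)

/-- Theorem 4 of the paper (finite horizon): if `S` is a stochastic bisimulation function
between the adapted processes `x` and `x̂` (i.e. `α ‖x - x̂‖² ≤ S x x̂` and
`𝔼[S (x (k+1)) (x̂ (k+1)) | ℱ k] ≤ S (x k) (x̂ k) + ψ` a.s.), with deterministic initial
states `a` and `â`, then for every `ε > 0` and finite horizon `T ≥ 1`,
`ℙ{ sup_{0 ≤ k ≤ T} ‖x k - x̂ k‖ ≥ ε } ≤ (S a â + ψ T) / (α ε²)`. -/
theorem sbf_probabilistic_closeness_finite_horizon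
    {Ω : Type*} {m0 : MeasurableSpace Ω} {μ : Measure Ω} [IsProbabilityMeasure μ]
    {n : ℕ} (ℱ : Filtration ℕ m0)
    (x xhat : ℕ → Ω → EuclideanSpace ℝ (Fin n))
    (a ahat : EuclideanSpace ℝ (Fin n))
    (hx0 : x 0 = fun _ => a) (hxhat0 : xhat 0 = fun _ => ahat)
    (hx : Adapted ℱ x) (hxhat : Adapted ℱ xhat)
    (S : EuclideanSpace ℝ (Fin n) → EuclideanSpace ℝ (Fin n) → ℝ)
    (hS_meas : Measurable (Function.uncurry S))
    (hS_nonneg : ∀ y z, 0 ≤ S y z)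
    (α ψ : ℝ) (hα : 0 < α) (hψ : 0 ≤ ψ)
    (hS_lower : ∀ y z, α * ‖y - z‖ ^ 2 ≤ S y z)
    (hint : ∀ k, Integrable (fun ω => S (x k ω) (xhat k ω)) μ)
    (hdrift : ∀ k,
      μ[fun ω => S (x (k + 1) ω) (xhat (k + 1) ω) | ℱ k] ≤ᵐ[μ]
        fun ω => S (x k ω) (xhat k ω) + ψ)
    (ε : ℝ) (hε : 0 < ε) (T : ℕ) (hT : 0 < T) :
    μ {ω | ∃ k ≤ T, ε ≤ ‖x k ω - xhat k ω‖} ≤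
      ENNReal.ofReal ((S a ahat + ψ * T) / (α * ε ^ 2)) := by
  classical
  -- the auxiliary nonnegative supermartingale
  set g : ℕ → Ω → ℝ :=
    fun k ω => S (x (min k T) ω) (xhat (min k T) ω) + ψ * ((T - min k T : ℕ) : ℝ) with hg_def
  have hSmeas' : ∀ m, Measurable[ℱ m] fun ω => S (x m ω) (xhat m ω) := by
    intro m
    exact hS_meas.comp ((hx m).prodMk (hxhat m))
  have hadp : Adapted ℱ g := by
    intro k
    have h1 : Measurable[ℱ k] fun ω => S (x (min k T) ω) (xhat (min k T) ω) :=
      (hSmeas' (min k T)).le (ℱ.mono (min_le_left k T))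
    exact (h1.add measurable_const)
  have hgint : ∀ k, Integrable (g k) μ := fun k =>
    (hint (min k T)).add (integrable_const _)
  have hsuper : Supermartingale g ℱ μ := by
    refine supermartingale_nat hadp.stronglyAdapted hgint fun k => ?_
    by_cases hk : k < T
    · have h1 : min k T = k := min_eq_left hk.le
      have h2 : min (k + 1) T = k + 1 := min_eq_left hk
      have hconst : ((T - (k + 1) : ℕ) : ℝ) + ψ⁻¹ * 0 = ((T - (k + 1) : ℕ) : ℝ) := by ring
      have hgeq : g (k + 1) =
          (fun ω => S (x (k + 1) ω) (xhat (k + 1) ω)) + fun _ => ψ * ((T - (k + 1) : ℕ) : ℝ) := by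
        funext ω; simp only [hg_def, h2, Pi.add_apply]
      have hce : μ[g (k + 1) | ℱ k] =ᵐ[μ]
          fun ω => (μ[fun ω => S (x (k + 1) ω) (xhat (k + 1) ω) | ℱ k]) ω
            + ψ * ((T - (k + 1) : ℕ) : ℝ) := by
        rw [hgeq]
        refine (condExp_add (hint (k + 1)) (integrable_const _) (ℱ k)).trans ?_
        refine Filter.EventuallyEq.of_eq ?_
        funext ω
        simp [condExp_const (ℱ.le k)]
      filter_upwards [hce, hdrift k] with ω hω hd
      rw [hω]
      have hcast : ((T - k : ℕ) : ℝ) = ((T - (k + 1) : ℕ) : ℝ) + 1 := by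
        have : T - k = (T - (k + 1)) + 1 := by omega
        rw [this]; push_cast; ring
      simp only [hg_def, h1]
      calc (μ[fun ω => S (x (k + 1) ω) (xhat (k + 1) ω) | ℱ k]) ω + ψ * ((T - (k + 1) : ℕ) : ℝ)
          ≤ (S (x k ω) (xhat k ω) + ψ) + ψ * ((T - (k + 1) : ℕ) : ℝ) := by linarith [hd]
        _ = S (x k ω) (xhat k ω) + ψ * ((T - k : ℕ) : ℝ) := by rw [hcast]; ring
    · have h1 : min k T = T := min_eq_right (not_lt.mp hk)
      have h2 : min (k + 1) T = T := min_eq_right ((not_lt.mp hk).trans (Nat.le_succ k))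
      have hgeq : g (k + 1) = g k := by
        funext ω; simp only [hg_def]; rw [h1, h2]
      rw [hgeq]
      have hmeas : StronglyMeasurable[ℱ k] (g k) := (hadp k).stronglyMeasurable
      rw [condExp_of_stronglyMeasurable (ℱ.le k) hmeas (hgint k)]
  have hnonneg : ∀ k ω, 0 ≤ g k ω := fun k ω =>
    add_nonneg (hS_nonneg _ _) (mul_nonneg hψ (Nat.cast_nonneg _))
  have hc : (0:ℝ) < α * ε ^ 2 := by positivity
  have hsub : {ω | ∃ k ≤ T, ε ≤ ‖x k ω - xhat k ω‖} ⊆ {ω | ∃ k ≤ T, α * ε ^ 2 ≤ g k ω} := by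
    intro ω hω
    obtain ⟨k, hkT, hk⟩ := hω
    refine ⟨k, hkT, ?_⟩
    have h1 : min k T = k := min_eq_left hkT
    have h2 : α * ε ^ 2 ≤ α * ‖x k ω - xhat k ω‖ ^ 2 := by
      have := pow_le_pow_left₀ hε.le hk 2
      nlinarith
    have h3 := hS_lower (x k ω) (xhat k ω)
    simp only [hg_def, h1]
    have h4 : (0:ℝ) ≤ ψ * ((T - k : ℕ) : ℝ) := mul_nonneg hψ (Nat.cast_nonneg _)
    linarith
  have hint0 : ∫ ω, g 0 ω ∂μ = S a ahat + ψ * T := by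
    have h0 : min 0 T = 0 := Nat.min_eq_left (Nat.zero_le T)
    have : g 0 = fun _ => S a ahat + ψ * T := by
      funext ω
      simp only [hg_def, h0, hx0, hxhat0, Nat.sub_zero]
    rw [this]
    simp
  calc μ {ω | ∃ k ≤ T, ε ≤ ‖x k ω - xhat k ω‖}
      ≤ μ {ω | ∃ k ≤ T, α * ε ^ 2 ≤ g k ω} := measure_mono hsub
    _ ≤ ENNReal.ofReal ((∫ ω, g 0 ω ∂μ) / (α * ε ^ 2)) :=
        supermartingale_maximal_ineq hsuper hnonneg hc T
    _ = ENNReal.ofReal ((S a ahat + ψ * T) / (α * ε ^ 2)) := by rw [hint0]
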